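/- Let σ ∈ (1,2), 0 < ε ≤ 1, and for s ≥ 0 define Θ_ε(s) = (ε+s)^σ/σ − ε^σ/σ − ε^{σ−1} s. Then Θ_ε(s) ≥ s^σ/(2σ) − (ε^σ/σ)(1 + (σ−1) 2^{1/(σ−1)}) for all s ≥ 0. -/

import Mathlib

theorem Theta_lower_bound (σ ε : ℝ) (hσ1 : 1 < σ) (hσ2 : σ < 2)
    (hε0 : 0 < ε) (hε1 : ε ≤ 1) :
    ∀ s : ℝ, 0 ≤ s →
      s ^ σ / (2 * σ) - (ε ^ σ / σ) * (1 + (σ - 1) * (2 : ℝ) ^ (1 / (σ - 1)))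
        ≤ (ε + s) ^ σ / σ - ε ^ σ / σ - ε ^ (σ - 1) * s := by
  intro s hs
  have hσ0 : (0 : ℝ) < σ := by linarith
  have hσ1' : (0 : ℝ) < σ - 1 := by linarith
  have hεs : (0 : ℝ) < ε + s := by linarith
  -- superadditivity : ε^σ + s^σ ≤ (ε+s)^σ
  have h1 : ε ^ σ + s ^ σ ≤ (ε + s) ^ σ := by
    have ha : ε ^ σ ≤ (ε + s) ^ (σ - 1) * ε := by
      have := Real.rpow_le_rpow hε0.le (by linarith : ε ≤ ε + s) (by linarith : (0:ℝ) ≤ σ - 1)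
      calc ε ^ σ = ε ^ (σ - 1) * ε := by
            rw [← Real.rpow_add_one hε0.ne' (σ - 1)]; ring_nf
        _ ≤ (ε + s) ^ (σ - 1) * ε := by
            exact mul_le_mul_of_nonneg_right this hε0.le
    have hb : s ^ σ ≤ (ε + s) ^ (σ - 1) * s := by
      rcases eq_or_lt_of_le hs with h | h
      · simp [← h, Real.zero_rpow hσ0.ne']
      · have := Real.rpow_le_rpow h.le (by linarith : s ≤ ε + s) (by linarith : (0:ℝ) ≤ σ - 1)
        calc s ^ σ = s ^ (σ - 1) * s := by
              rw [← Real.rpow_add_one h.ne' (σ - 1)]; ring_nf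
          _ ≤ (ε + s) ^ (σ - 1) * s := mul_le_mul_of_nonneg_right this hs
    have hc : (ε + s) ^ (σ - 1) * ε + (ε + s) ^ (σ - 1) * s = (ε + s) ^ σ := by
      rw [← mul_add, ← Real.rpow_add_one hεs.ne' (σ - 1)]; ring_nf
    linarith
  -- Young's inequality : ε^(σ-1) * s ≤ (σ-1)/σ * 2^(1/(σ-1)) * ε^σ + s^σ/(2σ)
  set t : ℝ := (2 : ℝ) ^ (1 / (σ - 1)) with ht
  have h2 : ε ^ (σ - 1) * s ≤ (σ - 1) / σ * t * ε ^ σ + s ^ σ / (2 * σ) := by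
    have hconj : Real.HolderConjugate (σ / (σ - 1)) σ := by
      rw [Real.holderConjugate_iff]; constructor
      · rw [lt_div_iff₀ hσ1']; linarith
      · field_simp; ring
    have hx : (0 : ℝ) ≤ ε ^ (σ - 1) * (2 : ℝ) ^ (1 / σ) := by positivity
    have hy : (0 : ℝ) ≤ s / (2 : ℝ) ^ (1 / σ) := by positivity
    have h2pos : (0 : ℝ) < (2 : ℝ) ^ (1 / σ) := by positivity
    have h := Real.young_inequality_of_nonneg hx hy hconj
    have hxy : ε ^ (σ - 1) * (2 : ℝ) ^ (1 / σ) * (s / (2 : ℝ) ^ (1 / σ))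
        = ε ^ (σ - 1) * s := by field_simp
    have hxp : (ε ^ (σ - 1) * (2 : ℝ) ^ (1 / σ)) ^ (σ / (σ - 1)) = ε ^ σ * t := by
      rw [Real.mul_rpow (by positivity) (by positivity),
        ← Real.rpow_mul hε0.le, ← Real.rpow_mul (by norm_num : (0:ℝ) ≤ 2)]
      congr 1
      · congr 1
        field_simp
      · rw [ht]
        congr 1
        field_simp
    have hyq : (s / (2 : ℝ) ^ (1 / σ)) ^ σ = s ^ σ / 2 := by
      rw [Real.div_rpow hs (by positivity), ← Real.rpow_mul (by norm_num : (0:ℝ) ≤ 2)]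
      congr 1
      rw [one_div, inv_mul_cancel₀ hσ0.ne']
      exact Real.rpow_one 2
    rw [hxy, hxp, hyq] at h
    calc ε ^ (σ - 1) * s ≤ ε ^ σ * t / (σ / (σ - 1)) + s ^ σ / 2 / σ := h
      _ = (σ - 1) / σ * t * ε ^ σ + s ^ σ / (2 * σ) := by
          field_simp
  -- combine
  have h1' : ε ^ σ / σ + s ^ σ / σ ≤ (ε + s) ^ σ / σ := by
    rw [← add_div]
    exact div_le_div_of_nonneg_right h1 hσ0.le
  have hkey : (ε ^ σ / σ) * (1 + (σ - 1) * t) = ε ^ σ / σ + (σ - 1) / σ * t * ε ^ σ := by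
    field_simp
  have hsplit : s ^ σ / σ = s ^ σ / (2 * σ) + s ^ σ / (2 * σ) := by
    field_simp; ring
  have hεσ : (0 : ℝ) ≤ ε ^ σ / σ := by positivity
  linarith
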